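/- Let V be a finite-dimensional real inner product space, C ⊆ V a proper cone and F a Finsler function on C. Then the polar of C^× equals {(p, w) ∈ V × ℝ | p ∈ C^o ∧ |w| ≤ F^o p} ∪ {(0, 0)}. -/

import Mathlib

/-- The polar cone of `C`. -/
def polarConeSet {V : Type*} [NormedAddCommGroup V] [InnerProductSpace ℝ V]
    (C : Set V) : Set V :=
  {p : V | p ≠ 0 ∧ ∀ y ∈ C, (inner ℝ p y : ℝ) ≤ 0}

/-- The set whose supremum defines the polar Finsler function `F^o p`. -/
def polarWSet {V : Type*} [NormedAddCommGroup V] [InnerProductSpace ℝ V]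
    (C : Set V) (F : V → ℝ) (p : V) : Set ℝ :=
  {w : ℝ | 0 ≤ w ∧ ∀ y ∈ C, (inner ℝ p y : ℝ) + w * F y ≤ 0}

/-- The polar Finsler function `F^o`. -/
noncomputable def polarFinsler {V : Type*} [NormedAddCommGroup V] [InnerProductSpace ℝ V]
    (C : Set V) (F : V → ℝ) (p : V) : ℝ :=
  sSup (polarWSet C F p)

/-- The polar of the lifted cone `C^× = {(y, z) | y ∈ C, |z| ≤ F y}` equals
`{(p, w) | p ∈ C^o, |w| ≤ F^o p} ∪ {(0, 0)}`. -/
theorem polar_of_lifted_cone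
    {V : Type*} [NormedAddCommGroup V] [InnerProductSpace ℝ V] [FiniteDimensional ℝ V]
    (C : Set V) (hne : C.Nonempty) (hconv : Convex ℝ C) (h0 : (0:V) ∉ C)
    (hcone : ∀ (s : ℝ) (y : V), 0 < s → y ∈ C → s • y ∈ C)
    (hclosed : IsClosed (C ∪ {0}))
    (hint : (interior (C ∪ {0})).Nonempty)
    (F : V → ℝ)
    (hFnn : ∀ y ∈ C, 0 ≤ F y)
    (hFhom : ∀ (s : ℝ) (y : V), 0 < s → y ∈ C → F (s • y) = s * F y)
    (hFconc : ∀ y ∈ C, ∀ w ∈ C, ∀ t : ℝ, t ∈ Set.Icc (0:ℝ) 1 →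
      t * F y + (1 - t) * F w ≤ F (t • y + (1 - t) • w))
    (hFpos : ∃ y₁ ∈ C, 0 < F y₁) :
    {pw : V × ℝ | ∀ yz ∈ {yz : V × ℝ | yz.1 ∈ C ∧ |yz.2| ≤ F yz.1},
        (inner ℝ pw.1 yz.1 : ℝ) + pw.2 * yz.2 ≤ 0} =
      {pw : V × ℝ | pw.1 ∈ polarConeSet C ∧ |pw.2| ≤ polarFinsler C F pw.1} ∪
        {((0 : V), (0 : ℝ))} := by
  obtain ⟨y₁, hy₁, hFy₁⟩ := hFpos
  ext ⟨p, w⟩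
  simp only [Set.mem_setOf_eq, Set.mem_union, Set.mem_singleton_iff, Prod.mk.injEq,
    polarConeSet, polarFinsler, polarWSet]
  constructor
  · intro h
    have hkey : ∀ y ∈ C, (inner ℝ p y : ℝ) + |w| * F y ≤ 0 := by
      intro y hy
      rcases le_or_gt 0 w with hw | hw
      · have := h (y, F y) ⟨hy, by rw [abs_of_nonneg (hFnn y hy)]⟩
        rwa [abs_of_nonneg hw]
      · have := h (y, -F y) ⟨hy, by rw [abs_neg, abs_of_nonneg (hFnn y hy)]⟩
        simp only at this
        rw [abs_of_neg hw]
        nlinarith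
    have hpneg : ∀ y ∈ C, (inner ℝ p y : ℝ) ≤ 0 := by
      intro y hy
      have := h (y, 0) ⟨hy, by simpa using hFnn y hy⟩
      simpa using this
    by_cases hp : p = 0
    · right
      refine ⟨hp, ?_⟩
      have hk := hkey y₁ hy₁
      rw [hp] at hk
      simp only [inner_zero_left] at hk
      have hw0 : |w| ≤ 0 := by nlinarith [abs_nonneg w]
      exact abs_nonpos_iff.mp hw0
    · left
      refine ⟨⟨hp, hpneg⟩, ?_⟩
      have hmem : |w| ∈ {w : ℝ | 0 ≤ w ∧ ∀ y ∈ C, (inner ℝ p y : ℝ) + w * F y ≤ 0} :=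
        ⟨abs_nonneg w, hkey⟩
      have hbdd : BddAbove {w : ℝ | 0 ≤ w ∧ ∀ y ∈ C, (inner ℝ p y : ℝ) + w * F y ≤ 0} := by
        refine ⟨-(inner ℝ p y₁ : ℝ) / F y₁, ?_⟩
        rintro w' ⟨hw'0, hw'⟩
        have := hw' y₁ hy₁
        rw [le_div_iff₀ hFy₁]
        linarith
      exact le_csSup hbdd hmem
  · rintro (⟨⟨hp, hpneg⟩, hwle⟩ | ⟨hp, hw⟩)
    · rintro ⟨y, z⟩ ⟨hy, hz⟩
      simp only
      have hne' : {w : ℝ | 0 ≤ w ∧ ∀ y ∈ C, (inner ℝ p y : ℝ) + w * F y ≤ 0}.Nonempty :=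
        ⟨0, le_refl 0, fun y hy => by simpa using hpneg y hy⟩
      have habs : (inner ℝ p y : ℝ) + |w| * F y ≤ 0 := by
        rcases (hFnn y hy).lt_or_eq with hFy | hFy
        · have hSub : sSup {w : ℝ | 0 ≤ w ∧ ∀ y ∈ C, (inner ℝ p y : ℝ) + w * F y ≤ 0}
              ≤ -(inner ℝ p y : ℝ) / F y := by
            apply csSup_le hne'
            rintro w' ⟨hw'0, hw'⟩
            rw [le_div_iff₀ hFy]
            have := hw' y hy
            linarith
          have hle : |w| ≤ -(inner ℝ p y : ℝ) / F y := le_trans hwle hSub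
          rw [le_div_iff₀ hFy] at hle
          linarith
        · rw [← hFy]
          simpa using hpneg y hy
      have hwz : w * z ≤ |w| * F y :=
        le_trans (le_abs_self _)
          (by rw [abs_mul]; exact mul_le_mul_of_nonneg_left hz (abs_nonneg w))
      linarith
    · subst hp; subst hw
      rintro ⟨y, z⟩ ⟨hy, hz⟩
      simp [inner_zero_left]
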